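/- Deletion of a redundant twin terminal preserves the solution set: let (G, T, R, k) be a Node Multiway Cut-Uncut instance and u₁, u₂, u₃ ∈ T three distinct terminals of the same R-equivalence class, pairwise nonadjacent, with N_G(u₁) = N_G(u₂) = N_G(u₃) ⊆ V(G) \ T. Let I' be obtained by deleting u₃ (and all pairs involving u₃ from R). Then the set of solutions of I' equals the set of solutions of I. -/

import Mathlib

variable {V : Type*}

/-- The graph `G` with the vertex set `X` (effectively) removed: only edges with both
endpoints outside `X` are kept, so the vertices of `X` become isolated. -/
def delV (G : SimpleGraph V) (X : Set V) : SimpleGraph V where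
  Adj u w := G.Adj u w ∧ u ∉ X ∧ w ∉ X
  symm := by constructor; rintro u w ⟨h, hu, hw⟩; exact ⟨h.symm, hw, hu⟩
  loopless := by constructor; rintro u ⟨h, -, -⟩; exact G.loopless.irrefl u h

/-- `X` is a solution to the Node Multiway Cut-Uncut instance `(G, T, R, k)`:
`X` is a set of at most `k` nonterminal vertices and two terminals lie in the same
connected component of `G \ X` exactly when they are `R`-equivalent. -/
def NMWCUSol (G : SimpleGraph V) (T : Set V) (R : V → V → Prop) (k : ℕ)
    (X : Set V) : Prop :=
  X ⊆ Tᶜ ∧ X.ncard ≤ k ∧ ∀ u ∈ T, ∀ v ∈ T, ((delV G X).Reachable u v ↔ R u v)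

private lemma delV_adj' {G : SimpleGraph V} {X : Set V} {u w : V} :
    (delV G X).Adj u w ↔ G.Adj u w ∧ u ∉ X ∧ w ∉ X := Iff.rfl

private def ffun [DecidableEq V] (u₁ u₃ : V) (v : V) : V := if v = u₃ then u₁ else v

/-- Rerouting lemma: a walk in `G \\ X` between vertices other than `u₃` can be
rerouted through `u₁` to avoid `u₃`. -/
private lemma reach_del {G : SimpleGraph V} {X : Set V} {u₁ u₃ : V}
    (h13 : u₁ ≠ u₃) (hu1 : u₁ ∉ X)
    (hN : G.neighborSet u₁ = G.neighborSet u₃)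
    {a b : V} (ha : a ≠ u₃) (hb : b ≠ u₃)
    (h : (delV G X).Reachable a b) : (delV (delV G {u₃}) X).Reachable a b := by
  classical
  have hmap : ∀ {p q : V}, (delV G X).Adj p q →
      (delV (delV G {u₃}) X).Adj (ffun u₁ u₃ p) (ffun u₁ u₃ q) := by
    intro p q hpq
    obtain ⟨hadj, hp, hq⟩ := hpq
    by_cases hp3 : p = u₃ <;> by_cases hq3 : q = u₃
    · subst hp3; subst hq3; exact absurd hadj (G.loopless.irrefl q)
    · subst hp3
      have hq1 : G.Adj u₁ q := by
        have : q ∈ G.neighborSet u₁ := by rw [hN]; exact hadj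
        exact this
      simp only [ffun, if_pos rfl, if_neg hq3]
      exact ⟨⟨hq1, by simp [h13], by simp [hq3]⟩, hu1, hq⟩
    · subst hq3
      have hp1 : G.Adj u₁ p := by
        have : p ∈ G.neighborSet u₁ := by rw [hN]; exact hadj.symm
        exact this
      simp only [ffun, if_pos rfl, if_neg hp3]
      exact ⟨⟨hp1.symm, by simp [hp3], by simp [h13]⟩, hp, hu1⟩
    · simp only [ffun, if_neg hp3, if_neg hq3]
      exact ⟨⟨hadj, by simp [hp3], by simp [hq3]⟩, hp, hq⟩
  have h2 : (delV (delV G {u₃}) X).Reachable (ffun u₁ u₃ a) (ffun u₁ u₃ b) :=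
    h.map ⟨ffun u₁ u₃, fun hpq => hmap hpq⟩
  simpa only [ffun, if_neg ha, if_neg hb] using h2

private lemma reach_mono {G : SimpleGraph V} {X : Set V} {u₃ : V} {a b : V}
    (h : (delV (delV G {u₃}) X).Reachable a b) : (delV G X).Reachable a b := by
  refine h.mono ?_
  rintro p q ⟨⟨hadj, -, -⟩, hp, hq⟩
  exact ⟨hadj, hp, hq⟩


/-- Deletion of a redundant twin terminal preserves the solution set: if `u₁, u₂, u₃`
are three distinct pairwise nonadjacent terminals of the same `R`-class with identical
neighborhoods consisting of nonterminals only, then the solutions of the original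
instance are exactly the solutions of the instance obtained by deleting the terminal
`u₃` (whose solutions avoid `u₃` and live in the graph with `u₃` removed). -/
theorem twin_terminal_deletion_preserves_solutions [Fintype V] (G : SimpleGraph V)
    (T : Set V) (R : V → V → Prop) (k : ℕ)
    (hrefl : ∀ t ∈ T, R t t)
    (hsym : ∀ s ∈ T, ∀ t ∈ T, R s t → R t s)
    (htrans : ∀ s ∈ T, ∀ t ∈ T, ∀ r ∈ T, R s t → R t r → R s r)
    (u₁ u₂ u₃ : V) (h1 : u₁ ∈ T) (h2 : u₂ ∈ T) (h3 : u₃ ∈ T)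
    (h12 : u₁ ≠ u₂) (h13 : u₁ ≠ u₃) (h23 : u₂ ≠ u₃)
    (hR12 : R u₁ u₂) (hR13 : R u₁ u₃) (hR23 : R u₂ u₃)
    (hadj12 : ¬ G.Adj u₁ u₂) (hadj13 : ¬ G.Adj u₁ u₃) (hadj23 : ¬ G.Adj u₂ u₃)
    (hN12 : G.neighborSet u₁ = G.neighborSet u₂)
    (hN13 : G.neighborSet u₁ = G.neighborSet u₃)
    (hNT : G.neighborSet u₁ ⊆ Tᶜ) :
    ∀ X : Set V, NMWCUSol G T R k X ↔
      (u₃ ∉ X ∧ NMWCUSol (delV G {u₃}) (T \ {u₃}) R k X) := by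
  intro X
  constructor
  · rintro ⟨hXT, hk, hreach⟩
    have hu3X : u₃ ∉ X := fun h => hXT h h3
    have hu1X : u₁ ∉ X := fun h => hXT h h1
    refine ⟨hu3X, ?_, hk, ?_⟩
    · intro x hx hxT
      exact hXT hx hxT.1
    · rintro u ⟨huT, hu3⟩ v ⟨hvT, hv3⟩
      simp only [Set.mem_singleton_iff] at hu3 hv3
      rw [← hreach u huT v hvT]
      constructor
      · exact reach_mono
      · exact reach_del h13 hu1X hN13 hu3 hv3
  · rintro ⟨hu3X, hXT', hk, hreach'⟩
    have hu1T' : u₁ ∈ T \ {u₃} := ⟨h1, by simp [h13]⟩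
    have hu2T' : u₂ ∈ T \ {u₃} := ⟨h2, by simp [h23]⟩
    have hXT : X ⊆ Tᶜ := by
      intro x hx hxT
      by_cases hx3 : x = u₃
      · exact hu3X (hx3 ▸ hx)
      · exact hXT' hx ⟨hxT, hx3⟩
    have hu1X : u₁ ∉ X := fun h => hXT h h1
    -- u₃ is reachable to u₁ in G \ X
    have h12r : (delV (delV G {u₃}) X).Reachable u₁ u₂ := (hreach' u₁ hu1T' u₂ hu2T').mpr hR12
    obtain ⟨p⟩ := h12r
    have hru31 : (delV G X).Reachable u₃ u₁ := by
      cases p with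
      | nil => exact absurd rfl h12
      | cons hadj p' =>
        rename_i w
        obtain ⟨⟨hadjG, _, hw3⟩, _, hwX⟩ := hadj
        simp only [Set.mem_singleton_iff] at hw3
        have hadj3w : (delV G X).Adj u₃ w := by
          refine ⟨?_, hu3X, hwX⟩
          have : w ∈ G.neighborSet u₃ := hN13 ▸ (hadjG : w ∈ G.neighborSet u₁)
          exact this
        have hadj1w : (delV G X).Adj u₁ w := ⟨hadjG, hu1X, hwX⟩
        exact hadj3w.reachable.trans hadj1w.symm.reachable
    -- key: reachability to u₃ is characterized via u₁
    have key : ∀ t ∈ T, t ≠ u₃ → ((delV G X).Reachable u₃ t ↔ R u₃ t) := by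
      intro t htT ht3
      have e1 : (delV G X).Reachable u₃ t ↔ (delV G X).Reachable u₁ t :=
        ⟨fun h => hru31.symm.trans h, fun h => hru31.trans h⟩
      have e2 : (delV G X).Reachable u₁ t ↔ R u₁ t := by
        rw [← hreach' u₁ hu1T' t ⟨htT, ht3⟩]
        exact ⟨reach_del h13 hu1X hN13 h13 ht3, reach_mono⟩
      have e3 : R u₁ t ↔ R u₃ t := by
        constructor
        · exact htrans u₃ h3 u₁ h1 t htT (hsym u₁ h1 u₃ h3 hR13)
        · exact htrans u₁ h1 u₃ h3 t htT hR13
      rw [e1, e2, e3]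
    refine ⟨hXT, hk, ?_⟩
    intro u huT v hvT
    by_cases hu3 : u = u₃ <;> by_cases hv3 : v = u₃
    · rw [hu3, hv3]
      exact iff_of_true (SimpleGraph.Reachable.refl _) (hrefl u₃ h3)
    · rw [hu3]; exact key v hvT hv3
    · rw [hv3]
      have hkey := key u huT hu3
      constructor
      · intro h; exact hsym u₃ h3 u huT (hkey.mp h.symm)
      · intro h; exact (hkey.mpr (hsym u huT u₃ h3 h)).symm
    · rw [← hreach' u ⟨huT, hu3⟩ v ⟨hvT, hv3⟩]
      exact ⟨reach_del h13 hu1X hN13 hu3 hv3, reach_mono⟩
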